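/- If the strings [b₁,…,b_r] and [c₁,…,c_s] are conjugate, then the reversed strings [b_r,…,b₁] and [c_s,…,c₁] are also conjugate. -/

import Mathlib

/-- The value of the Hirzebruch–Jung continued fraction
`[b₁,…,b_r] = b₁ − 1/(b₂ − 1/(⋯ − 1/b_r))`.
(For the empty list we set the value to `0`; since `1/0 = 0` in `ℚ`, the
recursion then gives the correct value `b_r` for singleton lists.) -/
def hjValue : List ℤ → ℚ
  | [] => 0
  | b :: l => (b : ℚ) - 1 / hjValue l

/-- A string is a nonempty list of integers, each at least `2`. -/
def IsString (l : List ℤ) : Prop := l ≠ [] ∧ ∀ b ∈ l, 2 ≤ b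

/-- Two strings are conjugate if their Hirzebruch–Jung continued fraction
values are `n/a` and `n/(n−a)` for some integers `0 < a < n` with
`gcd(a,n) = 1`. -/
def Conjugate (l l' : List ℤ) : Prop :=
  ∃ n a : ℤ, 0 < a ∧ a < n ∧ IsCoprime a n ∧
    hjValue l = (n : ℚ) / (a : ℚ) ∧ hjValue l' = (n : ℚ) / ((n : ℚ) - (a : ℚ))

def pA : List ℤ → ℤ × ℤ × ℤ × ℤ
  | [] => (1, 0, 0, 1)
  | b :: l =>
      (b * (pA l).1 - (pA l).2.1, (pA l).1, b * (pA l).2.2.1 - (pA l).2.2.2, (pA l).2.2.1)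

lemma pA_append (l : List ℤ) (b : ℤ) :
    pA (l ++ [b]) = (b * (pA l).1 + (pA l).2.2.1, b * (pA l).2.1 + (pA l).2.2.2,
      -(pA l).1, -(pA l).2.1) := by
  induction l with
  | nil => simp [pA]
  | cons c m ih =>
      simp only [List.cons_append, pA, List.append_eq, ih, Prod.mk.injEq]
      refine ⟨by ring, trivial, by ring, trivial⟩

lemma pA_reverse (l : List ℤ) :
    pA l.reverse = ((pA l).1, -(pA l).2.2.1, -(pA l).2.1, (pA l).2.2.2) := by
  induction l with
  | nil => simp [pA]
  | cons c m ih =>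
      simp only [List.reverse_cons, pA_append, ih, pA, Prod.mk.injEq]
      refine ⟨by ring, by ring, trivial, by ring⟩

lemma pA_main (l : List ℤ) (hne : l ≠ []) (hall : ∀ b ∈ l, 2 ≤ b) :
    1 ≤ (pA l).2.1 ∧ (pA l).2.1 < (pA l).1 ∧ (pA l).2.2.2 ≤ 0 ∧
      (pA l).2.2.1 < (pA l).2.2.2 ∧ 1 ≤ (pA l).2.1 + (pA l).2.2.2 ∧
      (pA l).2.1 + (pA l).2.2.2 ≤ (pA l).1 + (pA l).2.2.1 ∧
      (pA l).1 * (pA l).2.2.2 - (pA l).2.1 * (pA l).2.2.1 = 1 ∧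
      hjValue l = ((pA l).1 : ℚ) / ((pA l).2.1 : ℚ) := by
  induction l with
  | nil => exact absurd rfl hne
  | cons b t ih =>
      have hb : 2 ≤ b := hall b (List.mem_cons_self)
      cases t with
      | nil =>
          refine ⟨by simp [pA], by simp [pA]; omega, by simp [pA], by simp [pA],
            by simp [pA], by simp [pA]; omega, by simp [pA], ?_⟩
          simp [pA, hjValue]
      | cons c m =>
          obtain ⟨h1, h2, h3, h4, h5, h6, h7, h8⟩ :=
            ih (by simp) (fun x hx => hall x (List.mem_cons_of_mem b hx))
          set p := (pA (c :: m)).1 with hp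
          set q := (pA (c :: m)).2.1 with hq
          set p' := (pA (c :: m)).2.2.1 with hp'
          set q' := (pA (c :: m)).2.2.2 with hq'
          have hc1 : 0 ≤ (b - 2) * p := mul_nonneg (by omega) (by omega)
          have hc2 : 0 ≤ (b - 2) * (-p') := mul_nonneg (by omega) (by omega)
          have hc3 : 0 ≤ (b - 2) * (p + p') := mul_nonneg (by omega) (by omega)
          have hpA : pA (b :: c :: m) = (b * p - q, p, b * p' - q', p') := rfl
          refine ⟨?_, ?_, ?_, ?_, ?_, ?_, ?_, ?_⟩ <;> rw [hpA] <;> dsimp only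
          · omega
          · nlinarith
          · omega
          · nlinarith
          · omega
          · nlinarith
          · linear_combination h7
          · have hp0 : (p : ℚ) ≠ 0 := by
              have : 0 < p := by omega
              exact_mod_cast this.ne'
            show (b : ℚ) - 1 / hjValue (c :: m) = _
            rw [h8]
            rw [one_div, inv_div]
            push_cast
            field_simp

lemma eq_of_frac {p q n a : ℤ} (hq : 1 ≤ q) (hqp : q < p) (ha : 0 < a) (han : a < n)
    (hcop : IsCoprime a n) (hcop2 : IsCoprime p q) (heq : p * a = n * q) :
    p = n ∧ q = a := by
  have hpn : p ∣ n := hcop2.dvd_of_dvd_mul_right ⟨a, heq.symm ▸ by ring⟩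
  have hnp : n ∣ p := hcop.symm.dvd_of_dvd_mul_right ⟨q, by linarith [heq]⟩
  have hpe : p = n := Int.dvd_antisymm (by omega) (by omega) hpn hnp
  refine ⟨hpe, ?_⟩
  subst hpe
  have := mul_left_cancel₀ (by omega : p ≠ 0) heq
  omega

/-- Main extraction: for a string with value `n/a` (lowest terms, `0<a<n`),
the reverse has value `n/a₁` with `0 < a₁ < n` and `a*a₁ ≡ 1 [ZMOD n]`,
explicitly `a * a₁ + q' * n = 1`. -/
lemma rev_value (l : List ℤ) (hl : IsString l) (n a : ℤ) (ha : 0 < a) (han : a < n)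
    (hcop : IsCoprime a n) (hv : hjValue l = (n : ℚ) / (a : ℚ)) :
    ∃ a₁ c : ℤ, 0 < a₁ ∧ a₁ < n ∧ a * a₁ + c * n = 1 ∧
      hjValue l.reverse = (n : ℚ) / (a₁ : ℚ) := by
  obtain ⟨hne, hall⟩ := hl
  obtain ⟨h1, h2, h3, h4, h5, h6, h7, h8⟩ := pA_main l hne hall
  set p := (pA l).1
  set q := (pA l).2.1
  set p' := (pA l).2.2.1
  set q' := (pA l).2.2.2
  -- identify p = n, q = a
  have hq0 : (q : ℚ) ≠ 0 := by exact_mod_cast (by omega : q ≠ 0)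
  have ha0 : (a : ℚ) ≠ 0 := by exact_mod_cast ha.ne'
  have hcross : (p : ℚ) / q = (n : ℚ) / a := by rw [← h8, hv]
  have hcrossZ : p * a = n * q := by exact_mod_cast (div_eq_div_iff hq0 ha0).mp hcross
  have hcop2 : IsCoprime p q := ⟨q', -p', by linarith [h7]⟩
  obtain ⟨hpe, hqe⟩ := eq_of_frac h1 h2 ha han hcop hcop2 hcrossZ
  -- the reverse
  have hrevne : l.reverse ≠ [] := by simpa using hne
  have hrevall : ∀ b ∈ l.reverse, 2 ≤ b := fun b hb => hall b (List.mem_reverse.mp hb)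
  obtain ⟨_, _, _, _, _, _, _, g8⟩ := pA_main l.reverse hrevne hrevall
  rw [pA_reverse] at g8
  have hdet : n * q' - a * p' = 1 := by rw [← hpe, ← hqe]; exact h7
  refine ⟨-p', q', by omega, by omega, by linear_combination hdet, ?_⟩
  rw [g8, show (pA l).1 = n from hpe]

/-- If two strings are conjugate, then so are their reversals. -/
theorem stmt_15 (l l' : List ℤ) (hl : IsString l) (hl' : IsString l')
    (h : Conjugate l l') : Conjugate l.reverse l'.reverse := by
  obtain ⟨n, a, ha, han, hcop, hv, hv'⟩ := h
  have hcop' : IsCoprime (n - a) n := by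
    have h1 : IsCoprime (-a) n := hcop.neg_left
    have h2 : IsCoprime (-a + 1 * n) n := h1.add_mul_right_left 1
    simpa [neg_add_eq_sub] using h2
  have hv'2 : hjValue l' = (n : ℚ) / ((n - a : ℤ) : ℚ) := by push_cast; exact hv'
  obtain ⟨a₁, c₁, ha₁, ha₁n, hd1, hr1⟩ := rev_value l hl n a ha han hcop hv
  obtain ⟨a₂, c₂, ha₂, ha₂n, hd2, hr2⟩ :=
    rev_value l' hl' n (n - a) (by omega) (by omega) hcop' hv'2
  have key : a₂ = n - a₁ := by
    have hdvd : n ∣ (n - a₁ - a₂) := by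
      have hd : (n - a) * (n - a₁ - a₂) = n * (n - a₁ - a - c₁ + c₂) := by
        linear_combination hd1 - hd2
      exact hcop'.symm.dvd_of_dvd_mul_left ⟨n - a₁ - a - c₁ + c₂, hd⟩
    obtain ⟨k, hk⟩ := hdvd
    have hk0 : k = 0 := by nlinarith
    rw [hk0, mul_zero] at hk
    omega
  refine ⟨n, a₁, ha₁, ha₁n, ⟨a, c₁, hd1⟩, hr1, ?_⟩
  rw [hr2, key]
  push_cast
  ring_nf
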